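/- The number of permutations p of {1,...,n} avoiding circular 1-successions mod n (i.e., p(i+1) ≢ p(i) + 1 (mod n) for all 1 ≤ i ≤ n-1, and p(1) ≢ p(n) + 1 (mod n)) equals n · [Σ_{j=0}^{n-1} (-1)^j · C(n, j) · (n-j-1)! + (-1)^n]. -/

import Mathlib

set_option linter.unusedSectionVars false
set_option maxHeartbeats 1000000

open Equiv Equiv.Perm Finset

/-- A permutation acts with a single orbit. -/
def OneOrbit {X : Type*} (π : Equiv.Perm X) : Prop := ∀ x y : X, ∃ k : ℕ, (π ^ k) x = y

variable {X : Type*}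

theorem perm_pow_eq_pow_mod {π : Equiv.Perm X} {m : ℕ} (h1 : π ^ m = 1) (a : ℕ) :
    π ^ a = π ^ (a % m) := by
  conv_lhs => rw [← Nat.mod_add_div a m, pow_add, pow_mul, h1, one_pow, mul_one]

theorem perm_pow_apply_comm (π : Equiv.Perm X) (a b : ℕ) (x : X) :
    (π ^ a) ((π ^ b) x) = (π ^ b) ((π ^ a) x) := by
  rw [← Equiv.Perm.mul_apply, ← Equiv.Perm.mul_apply, ← pow_add, ← pow_add, Nat.add_comm]

theorem oneOrbit_conj {c p : Equiv.Perm X} (hc : OneOrbit c) : OneOrbit (p⁻¹ * c * p) := by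
  intro x y
  obtain ⟨k, hk⟩ := hc (p x) (p y)
  refine ⟨k, ?_⟩
  have h : (p⁻¹ * c * p) ^ k = p⁻¹ * c ^ k * p := by
    have := conj_pow (i := k) (a := p⁻¹) (b := c)
    simpa [inv_inv] using this
  simp [h, Equiv.Perm.mul_apply, hk]

section Fintype
variable [Fintype X]

theorem oneOrbit_pow_card {π : Equiv.Perm X} (h : OneOrbit π) :
    π ^ (Fintype.card X) = 1 := by
  rcases isEmpty_or_nonempty X with hX | hX
  · ext x; exact hX.elim x
  obtain ⟨x₀⟩ := hX
  have hex : ∃ k, 0 < k ∧ (π ^ k) x₀ = x₀ :=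
    ⟨orderOf π, orderOf_pos π, by simp [pow_orderOf_eq_one]⟩
  classical
  set d := Nat.find hex with hd
  obtain ⟨hd0, hdfix⟩ := Nat.find_spec hex
  -- multiples of d fix x₀
  have hmul : ∀ q : ℕ, (π ^ (d * q)) x₀ = x₀ := by
    intro q
    induction q with
    | zero => simp
    | succ q ih =>
      have : d * (q + 1) = d * q + d := by ring
      rw [this, pow_add, Equiv.Perm.mul_apply, hdfix, ih]
  have hmod : ∀ a : ℕ, (π ^ a) x₀ = (π ^ (a % d)) x₀ := by
    intro a
    conv_lhs => rw [← Nat.mod_add_div a d, pow_add, Equiv.Perm.mul_apply, hmul]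
  -- the evaluation map is bijective
  have hbij : Function.Bijective (fun j : Fin d => (π ^ (j : ℕ)) x₀) := by
    constructor
    · rintro ⟨i, hi⟩ ⟨j, hj⟩ hij
      simp only at hij
      rcases Nat.lt_trichotomy i j with hlt | heq | hlt
      · exfalso
        have hfix : (π ^ (j - i)) ((π ^ i) x₀) = (π ^ i) x₀ := by
          rw [← Equiv.Perm.mul_apply, ← pow_add, Nat.sub_add_cancel hlt.le, hij]
        obtain ⟨s, hs⟩ := h ((π ^ i) x₀) x₀
        have hfix0 : (π ^ (j - i)) x₀ = x₀ := by
          rw [← hs, perm_pow_apply_comm, hfix]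
        have := Nat.find_le (h := hex) (show 0 < j - i ∧ (π ^ (j - i)) x₀ = x₀ from
          ⟨Nat.sub_pos_of_lt hlt, hfix0⟩)
        omega
      · exact Fin.ext heq
      · exfalso
        have hfix : (π ^ (i - j)) ((π ^ j) x₀) = (π ^ j) x₀ := by
          rw [← Equiv.Perm.mul_apply, ← pow_add, Nat.sub_add_cancel hlt.le, hij]
        obtain ⟨s, hs⟩ := h ((π ^ j) x₀) x₀
        have hfix0 : (π ^ (i - j)) x₀ = x₀ := by
          rw [← hs, perm_pow_apply_comm, hfix]
        have := Nat.find_le (h := hex) (show 0 < i - j ∧ (π ^ (i - j)) x₀ = x₀ from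
          ⟨Nat.sub_pos_of_lt hlt, hfix0⟩)
        omega
    · intro y
      obtain ⟨k, hk⟩ := h x₀ y
      refine ⟨⟨k % d, Nat.mod_lt _ hd0⟩, ?_⟩
      show (π ^ (k % d)) x₀ = y
      rw [← hmod, hk]
  have hcard : Fintype.card X = d := by
    rw [← Fintype.card_fin d]
    exact (Fintype.card_of_bijective hbij).symm
  ext y
  obtain ⟨k, hk⟩ := h x₀ y
  simp only [Equiv.Perm.coe_one, id_eq]
  rw [← hk, perm_pow_apply_comm, hcard, hdfix]

theorem oneOrbit_eval_bijective {π : Equiv.Perm X} (h : OneOrbit π) (x₀ : X)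
    [NeZero (Fintype.card X)] :
    Function.Bijective (fun k : ZMod (Fintype.card X) => (π ^ (ZMod.val k)) x₀) := by
  set m := Fintype.card X
  have hm : π ^ m = 1 := oneOrbit_pow_card h
  rw [Fintype.bijective_iff_surjective_and_card]
  constructor
  · intro y
    obtain ⟨k, hk⟩ := h x₀ y
    refine ⟨(k : ZMod m), ?_⟩
    simp only
    rw [ZMod.val_natCast, ← perm_pow_eq_pow_mod hm, hk]
  · simp [m, ZMod.card]

end Fintype

section count
variable {X : Type*} [Fintype X] [DecidableEq X] (x₀ : X)

/-- The number of equivalences sending a fixed point to a fixed point. -/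
theorem card_equiv_fixed [Nonempty X] :
    Nat.card {f : ZMod (Fintype.card X) ≃ X // f 0 = x₀} = (Fintype.card X - 1).factorial := by
  set m := Fintype.card X with hm
  haveI : NeZero m := ⟨(Fintype.card_pos).ne'⟩
  -- all fibers are equipotent
  have fibEquiv : ∀ b b' : X,
      {f : ZMod m ≃ X // f 0 = b} ≃ {f : ZMod m ≃ X // f 0 = b'} := by
    intro b b'
    refine ⟨fun f => ⟨f.1.trans (Equiv.swap b b'), ?_⟩, fun f => ⟨f.1.trans (Equiv.swap b b'), ?_⟩,
      ?_, ?_⟩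
    · simp [f.2]
    · simp [f.2]
    · rintro ⟨f, hf⟩
      ext k
      simp [Equiv.swap_apply_self]
    · rintro ⟨f, hf⟩
      ext k
      simp [Equiv.swap_apply_self]
  have key : Fintype.card (ZMod m ≃ X) = m * Fintype.card {f : ZMod m ≃ X // f 0 = x₀} := by
    have h1 : Fintype.card (ZMod m ≃ X) = Fintype.card (Σ b : X, {f : ZMod m ≃ X // f 0 = b}) :=
      Fintype.card_congr (Equiv.sigmaFiberEquiv (fun f : ZMod m ≃ X => f 0)).symm
    rw [h1, Fintype.card_sigma]
    have h2 : ∀ b : X, Fintype.card {f : ZMod m ≃ X // f 0 = b}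
        = Fintype.card {f : ZMod m ≃ X // f 0 = x₀} :=
      fun b => Fintype.card_congr (fibEquiv b x₀)
    simp only [h2, Finset.sum_const, Finset.card_univ, smul_eq_mul, hm]
  have hcards : Fintype.card (ZMod m ≃ X) = m.factorial := by
    have e : ZMod m ≃ X := Fintype.equivOfCardEq (by rw [ZMod.card])
    rw [Fintype.card_equiv e, ZMod.card]
  rw [Nat.card_eq_fintype_card]
  have hm1 : m = (m - 1) + 1 := (Nat.succ_pred_eq_of_pos Fintype.card_pos).symm
  have : m * Fintype.card {f : ZMod m ≃ X // f 0 = x₀} = m * (m - 1).factorial := by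
    rw [← key, hcards]
    conv_lhs => rw [hm1]
    rw [Nat.factorial_succ, ← hm1]
  exact Nat.eq_of_mul_eq_mul_left Fintype.card_pos this
end count

section count2
variable {X : Type*} [Fintype X] [DecidableEq X]

theorem zmod_val_add_one {m : ℕ} [NeZero m] (k : ZMod m) :
    (k + 1).val = (k.val + 1) % m := by
  rw [ZMod.val_add, ZMod.val_one_eq_one_mod, Nat.add_mod k.val 1 m,
    Nat.mod_eq_of_lt (ZMod.val_lt k)]

theorem card_oneOrbit [Nonempty X] :
    Nat.card {π : Equiv.Perm X // OneOrbit π} = (Fintype.card X - 1).factorial := by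
  set m := Fintype.card X with hm
  haveI : NeZero m := ⟨(Fintype.card_pos).ne'⟩
  obtain ⟨x₀⟩ := ‹Nonempty X›
  rw [← card_equiv_fixed x₀]
  refine Nat.card_eq_of_bijective
    (fun π => ⟨Equiv.ofBijective _ (oneOrbit_eval_bijective π.2 x₀), by
      simp [Equiv.ofBijective]⟩) ⟨?_, ?_⟩
  · rintro ⟨π, hπ⟩ ⟨π', hπ'⟩ hval
    have hfun : ∀ k : ZMod m, (π ^ (ZMod.val k)) x₀ = (π' ^ (ZMod.val k)) x₀ := by
      intro k
      have := congrArg (fun f => (f.1 : ZMod m → X) k) hval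
      simpa [Equiv.ofBijective] using this
    have h1 : π ^ m = 1 := oneOrbit_pow_card hπ
    have h1' : π' ^ m = 1 := oneOrbit_pow_card hπ'
    have hsucc : ∀ (σ : Equiv.Perm X), σ ^ m = 1 → ∀ k : ZMod m,
        (σ ^ ((k + 1).val)) x₀ = σ ((σ ^ (ZMod.val k)) x₀) := by
      intro σ hσ k
      rw [zmod_val_add_one, ← perm_pow_eq_pow_mod hσ, pow_succ', Equiv.Perm.mul_apply]
    refine Subtype.ext (Equiv.Perm.ext fun y => ?_)
    obtain ⟨k, hk⟩ := (oneOrbit_eval_bijective hπ x₀).surjective y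
    simp only at hk
    calc π y = (π ^ ((k + 1).val)) x₀ := by rw [hsucc π h1 k, hk]
    _ = (π' ^ ((k + 1).val)) x₀ := hfun (k + 1)
    _ = π' ((π' ^ (ZMod.val k)) x₀) := hsucc π' h1' k
    _ = π' y := by rw [← hfun k, hk]
  · rintro ⟨f, hf0⟩
    set π : Equiv.Perm X := f.symm.trans ((Equiv.addRight (1 : ZMod m)).trans f) with hπdef
    have hπapp : ∀ x, π x = f (f.symm x + 1) := fun x => rfl
    have hpow : ∀ (j : ℕ) (x), (π ^ j) x = f (f.symm x + (j : ZMod m)) := by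
      intro j
      induction j with
      | zero => intro x; simp
      | succ j ih =>
        intro x
        rw [pow_succ, Equiv.Perm.mul_apply, ih, hπapp]
        push_cast
        simp [add_assoc, add_comm]
    have horb : OneOrbit π := by
      intro x y
      refine ⟨(f.symm y - f.symm x).val, ?_⟩
      rw [hpow, ZMod.natCast_rightInverse _]
      simp
    refine ⟨⟨π, horb⟩, ?_⟩
    refine Subtype.ext (Equiv.ext fun k => ?_)
    show (π ^ (ZMod.val k)) x₀ = f k
    rw [hpow, ZMod.natCast_rightInverse _]
    have : f.symm x₀ = 0 := by rw [← hf0]; simp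
    rw [this, zero_add]
end count2

section reduction
variable {X : Type*} [Fintype X] [DecidableEq X] (c : Equiv.Perm X) (B : Finset X)

/-- Every point reaches `B` by iterating `c`. -/
def Reach : Prop := ∀ x : X, ∃ t : ℕ, (c ^ t) x ∈ B

theorem reach_of_oneOrbit {c : Equiv.Perm X} {B : Finset X} (hc : OneOrbit c)
    (hB : B.Nonempty) : Reach c B := by
  intro x
  obtain ⟨b, hb⟩ := hB
  obtain ⟨k, hk⟩ := hc x b
  exact ⟨k, hk ▸ hb⟩

variable (hr : Reach c B)

/-- Number of steps to first reach `B`. -/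
noncomputable def bsteps (x : X) : ℕ := Nat.find (hr x)

theorem bsteps_spec (x : X) : (c ^ bsteps c B hr x) x ∈ B := Nat.find_spec (hr x)

theorem bsteps_min {x : X} {t : ℕ} (ht : t < bsteps c B hr x) : (c ^ t) x ∉ B :=
  Nat.find_min (hr x) ht

/-- The first-return-style successor map on `B`. -/
noncomputable def nextB (b : ↥B) : ↥B :=
  ⟨(c ^ bsteps c B hr (c ↑b)) (c ↑b), bsteps_spec c B hr _⟩

theorem nextB_coe (b : ↥B) :
    (↑(nextB c B hr b) : X) = (c ^ (bsteps c B hr (c ↑b) + 1)) ↑b := by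
  show (c ^ bsteps c B hr (c ↑b)) (c ↑b) = _
  rw [pow_succ, Equiv.Perm.mul_apply]

theorem nextB_injective : Function.Injective (nextB c B hr) := by
  have key : ∀ b b' : ↥B, bsteps c B hr (c ↑b) < bsteps c B hr (c ↑b') →
      nextB c B hr b = nextB c B hr b' → False := by
    intro b b' hlt heq
    have hcoe := congrArg (Subtype.val) heq
    rw [nextB_coe, nextB_coe] at hcoe
    set s := bsteps c B hr (c ↑b)
    set s' := bsteps c B hr (c ↑b')
    -- b = c^(s'-s) b', i.e. b = c^(s'-s-1) (c b'), contradicting minimality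
    have h1 : (↑b : X) = (c ^ (s' - s)) ↑b' := by
      have h2 : (c ^ (s + 1)) ((c ^ (s' - s)) ↑b') = (c ^ (s + 1)) ↑b := by
        rw [← Equiv.Perm.mul_apply, ← pow_add,
          show s + 1 + (s' - s) = s' + 1 from by omega, ← hcoe]
      exact ((Equiv.injective (c ^ (s + 1))) h2).symm
    have h3 : (↑b : X) = (c ^ (s' - s - 1)) (c ↑b') := by
      have : (c ^ (s' - s - 1)) (c ↑b') = (c ^ (s' - s)) ↑b' := by
        rw [← Equiv.Perm.mul_apply, ← pow_succ,
          show s' - s - 1 + 1 = s' - s from by omega]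
      rw [this]
      exact h1
    have h4 : (c ^ (s' - s - 1)) (c ↑b') ∉ B := bsteps_min c B hr (by omega)
    rw [← h3] at h4
    exact h4 b.2
  intro b b' heq
  rcases Nat.lt_trichotomy (bsteps c B hr (c ↑b)) (bsteps c B hr (c ↑b')) with h | h | h
  · exact absurd heq (fun he => key b b' h he)
  · have hcoe := congrArg (Subtype.val) heq
    rw [nextB_coe, nextB_coe, h] at hcoe
    have := (Equiv.injective (c ^ (bsteps c B hr (c ↑b') + 1))) hcoe
    exact Subtype.ext this
  · exact absurd heq.symm (fun he => key b' b h he)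

/-- The first-return map as a permutation of `B`. -/
noncomputable def nextPerm : Equiv.Perm ↥B :=
  Equiv.ofBijective _ (Finite.injective_iff_bijective.mp (nextB_injective c B hr))

theorem nextPerm_apply (b : ↥B) : nextPerm c B hr b = nextB c B hr b := rfl

end reduction

section traj
variable {X : Type*} [Fintype X] [DecidableEq X] (c : Equiv.Perm X) (B : Finset X)
  (hr : Reach c B) (σ : Equiv.Perm X)

theorem traj (hfix : ∀ x ∉ B, σ x = x) (x : X) :
    ∀ t, t ≤ bsteps c B hr x → ((c * σ) ^ t) x = (c ^ t) x := by
  intro t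
  induction t with
  | zero => simp
  | succ t ih =>
    intro ht
    have ht' : t ≤ bsteps c B hr x := by omega
    rw [pow_succ', Equiv.Perm.mul_apply, ih ht']
    have h1 : (c * σ) ((c ^ t) x) = c (σ ((c ^ t) x)) := rfl
    rw [h1, hfix _ (bsteps_min c B hr (by omega)), pow_succ', Equiv.Perm.mul_apply]

theorem mem_iff_of_fix (hfix : ∀ x ∉ B, σ x = x) : ∀ x, σ x ∈ B ↔ x ∈ B := by
  intro x
  rw [Iff.comm]
  constructor
  · intro hx
    by_contra hsx
    have h2 : σ (σ x) = σ x := hfix _ hsx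
    have := σ.injective h2
    rw [this] at hsx
    exact hsx hx
  · intro hsx
    by_contra hx
    rw [hfix _ hx] at hsx
    exact hx hsx

theorem enter_eq (hfix : ∀ x ∉ B, σ x = x) (b : ↥B) :
    (((c * σ) ^ (bsteps c B hr (c (σ ↑b)) + 1)) ↑b : X)
      = ↑(nextPerm c B hr ((σ.subtypePerm (mem_iff_of_fix B σ hfix)) b)) := by
  rw [pow_succ, Equiv.Perm.mul_apply]
  have h1 : (c * σ) ↑b = c (σ ↑b) := rfl
  rw [h1, traj c B hr σ hfix _ _ le_rfl]
  rfl

theorem enter_not_mem (hfix : ∀ x ∉ B, σ x = x) (b : ↥B) :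
    ∀ j, 1 ≤ j → j < bsteps c B hr (c (σ ↑b)) + 1 → ((c * σ) ^ j) ↑b ∉ B := by
  intro j hj1 hj2
  have hdecomp : ((c * σ) ^ j) ↑b = ((c * σ) ^ (j - 1)) ((c * σ) ↑b) := by
    rw [← Equiv.Perm.mul_apply, ← pow_succ, show j - 1 + 1 = j from by omega]
  rw [hdecomp]
  have h1 : (c * σ) ↑b = c (σ ↑b) := rfl
  rw [h1, traj c B hr σ hfix _ _ (by omega)]
  exact bsteps_min c B hr (by omega)

end traj

section dirs
variable {X : Type*} [Fintype X] [DecidableEq X] (c : Equiv.Perm X) (B : Finset X)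
  (hr : Reach c B) (σ : Equiv.Perm X)

theorem dir1 (hfix : ∀ x ∉ B, σ x = x) (horb : OneOrbit (c * σ)) :
    OneOrbit (nextPerm c B hr * σ.subtypePerm (mem_iff_of_fix B σ hfix)) := by
  set σ' := σ.subtypePerm (mem_iff_of_fix B σ hfix) with hσ'
  set ρ := nextPerm c B hr * σ' with hρ
  have key : ∀ k : ℕ, ∀ b b' : ↥B, ((c * σ) ^ k) ↑b = ↑b' → ∃ l, (ρ ^ l) b = b' := by
    intro k
    induction k using Nat.strong_induction_on with
    | _ k ih =>
      intro b b' hk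
      rcases Nat.eq_zero_or_pos k with h0 | hpos
      · subst h0
        simp only [pow_zero, Equiv.Perm.coe_one, id_eq] at hk
        exact ⟨0, by simp [Subtype.ext hk]⟩
      · set s := bsteps c B hr (c (σ ↑b)) with hs
        by_cases hk1 : k < s + 1
        · exact absurd (hk ▸ b'.2) (enter_not_mem c B hr σ hfix b k hpos hk1)
        · push_neg at hk1
          have hdec : ((c * σ) ^ k) ↑b
              = ((c * σ) ^ (k - (s + 1))) (((c * σ) ^ (s + 1)) ↑b) := by
            rw [← Equiv.Perm.mul_apply, ← pow_add, Nat.sub_add_cancel hk1]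
          rw [enter_eq c B hr σ hfix b] at hdec
          have hρb : (nextPerm c B hr) (σ' b) = ρ b := rfl
          rw [hρb] at hdec
          obtain ⟨l, hl⟩ := ih (k - (s + 1)) (by omega) (ρ b) b' (by rw [← hdec, hk])
          exact ⟨l + 1, by rw [pow_succ, Equiv.Perm.mul_apply, hl]⟩
  intro b b'
  obtain ⟨k, hk⟩ := horb ↑b ↑b'
  exact key k b b' hk

theorem dir2 (hfix : ∀ x ∉ B, σ x = x)
    (horb : OneOrbit (nextPerm c B hr * σ.subtypePerm (mem_iff_of_fix B σ hfix))) :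
    OneOrbit (c * σ) := by
  set σ' := σ.subtypePerm (mem_iff_of_fix B σ hfix) with hσ'
  set ρ := nextPerm c B hr * σ' with hρ
  have hA : ∀ (l : ℕ) (b : ↥B), ∃ k, ((c * σ) ^ k) ↑b = ↑((ρ ^ l) b) := by
    intro l
    induction l with
    | zero => exact fun b => ⟨0, by simp⟩
    | succ l ih =>
      intro b
      obtain ⟨k, hk⟩ := ih b
      refine ⟨(bsteps c B hr (c (σ ↑((ρ ^ l) b))) + 1) + k, ?_⟩
      rw [pow_add, Equiv.Perm.mul_apply, hk, enter_eq c B hr σ hfix]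
      have : (nextPerm c B hr) (σ' ((ρ ^ l) b)) = ρ ((ρ ^ l) b) := rfl
      rw [this, ← Equiv.Perm.mul_apply, ← pow_succ']
  intro x y
  -- reach B from x
  have hx : ((c * σ) ^ (bsteps c B hr x)) x = (c ^ (bsteps c B hr x)) x :=
    traj c B hr σ hfix x _ le_rfl
  set bx : ↥B := ⟨(c ^ (bsteps c B hr x)) x, bsteps_spec c B hr x⟩ with hbx
  set by' : ↥B := ⟨(c ^ (bsteps c B hr y)) y, bsteps_spec c B hr y⟩ with hby
  -- from ν y return to y
  set M := orderOf (c * σ) with hM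
  have hMpos : 0 < M := orderOf_pos _
  set s := bsteps c B hr y with hsy
  have hy : ((c * σ) ^ s) y = ↑by' := traj c B hr σ hfix y _ le_rfl
  have hret : ((c * σ) ^ (M * (s + 1) - s)) ↑by' = y := by
    rw [← hy, ← Equiv.Perm.mul_apply, ← pow_add,
      Nat.sub_add_cancel (by nlinarith), pow_mul, pow_orderOf_eq_one, one_pow]
    rfl
  obtain ⟨l, hl⟩ := horb bx by'
  obtain ⟨k₁, hk₁⟩ := hA l bx
  rw [hl] at hk₁
  refine ⟨(M * (s + 1) - s) + (k₁ + bsteps c B hr x), ?_⟩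
  rw [pow_add, Equiv.Perm.mul_apply, pow_add, Equiv.Perm.mul_apply, hx]
  have hxb : ((c ^ (bsteps c B hr x)) x) = ↑bx := rfl
  rw [hxb, hk₁, hret]

end dirs

theorem card_restricted_oneOrbit {X : Type*} [Fintype X] [DecidableEq X]
    (c : Equiv.Perm X) (B : Finset X) (hc : OneOrbit c) (hB : B.Nonempty) :
    Nat.card {σ : Equiv.Perm X // (∀ x ∉ B, σ x = x) ∧ OneOrbit (c * σ)}
      = (B.card - 1).factorial := by
  haveI : Nonempty ↥B := Finset.nonempty_coe_sort.mpr hB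
  have hr : Reach c B := reach_of_oneOrbit hc hB
  have e1 : {σ : Equiv.Perm X // (∀ x ∉ B, σ x = x) ∧ OneOrbit (c * σ)} ≃
      {σ' : Equiv.Perm ↥B // OneOrbit (nextPerm c B hr * σ')} := by
    refine ⟨fun σ => ⟨σ.1.subtypePerm (mem_iff_of_fix B σ.1 σ.2.1),
        dir1 c B hr σ.1 σ.2.1 σ.2.2⟩,
      fun σ' => ⟨Equiv.Perm.ofSubtype σ'.1,
        fun x hx => Equiv.Perm.ofSubtype_apply_of_not_mem σ'.1 hx, ?_⟩, ?_, ?_⟩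
    · apply dir2 c B hr _ (fun x hx => Equiv.Perm.ofSubtype_apply_of_not_mem σ'.1 hx)
      have : (Equiv.Perm.ofSubtype σ'.1).subtypePerm
          (mem_iff_of_fix B _ (fun x hx => Equiv.Perm.ofSubtype_apply_of_not_mem σ'.1 hx))
          = σ'.1 := Equiv.Perm.subtypePerm_ofSubtype σ'.1
      rw [this]
      exact σ'.2
    · rintro ⟨σ, h1, h2⟩
      refine Subtype.ext ?_
      exact Equiv.Perm.ofSubtype_subtypePerm (mem_iff_of_fix B σ h1) (fun x hx => by
        by_contra hxB
        exact hx (h1 x hxB))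
    · rintro ⟨σ', h⟩
      exact Subtype.ext (Equiv.Perm.subtypePerm_ofSubtype σ')
  have e2 : {σ' : Equiv.Perm ↥B // OneOrbit (nextPerm c B hr * σ')} ≃
      {π : Equiv.Perm ↥B // OneOrbit π} :=
    Equiv.subtypeEquiv (Equiv.mulLeft (nextPerm c B hr)) (fun σ' => Iff.rfl)
  rw [Nat.card_congr (e1.trans e2), card_oneOrbit, Fintype.card_coe]

section conj
variable {X : Type*} [Fintype X] [DecidableEq X] [Nonempty X]

theorem pow_val_succ_apply {m : ℕ} [NeZero m] (σ : Equiv.Perm X) (hσ : σ ^ m = 1)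
    (x : X) (k : ZMod m) : (σ ^ ((k + 1).val)) x = σ ((σ ^ k.val) x) := by
  rw [zmod_val_add_one, ← perm_pow_eq_pow_mod hσ, pow_succ', Equiv.Perm.mul_apply]

theorem card_constrained (c : Equiv.Perm X) (hc : OneOrbit c) (A : Finset X) :
    Nat.card {p : Equiv.Perm X // ∀ i ∈ A, p (c i) = c (p i)}
      = Fintype.card X *
        Nat.card {σ : Equiv.Perm X // (∀ x ∉ Aᶜ, σ x = x) ∧ OneOrbit (c * σ)} := by
  obtain ⟨x₀⟩ := ‹Nonempty X›
  set m := Fintype.card X with hm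
  haveI : NeZero m := ⟨Fintype.card_pos.ne'⟩
  have hcm : c ^ m = 1 := oneOrbit_pow_card hc
  -- the bijection
  have hσfix : ∀ (p : Equiv.Perm X) (i : X),
      (c⁻¹ * (p⁻¹ * (c * p))) i = i ↔ p (c i) = c (p i) := by
    intro p i
    simp only [Equiv.Perm.mul_apply]
    constructor
    · intro h
      have := congrArg (fun z => p (c z)) h
      simpa [Equiv.Perm.inv_def, Equiv.apply_symm_apply] using this.symm
    · intro h
      simp [← h, Equiv.Perm.inv_def]
  have key : Nat.card {p : Equiv.Perm X // ∀ i ∈ A, p (c i) = c (p i)}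
      = Nat.card (X × {σ : Equiv.Perm X // (∀ x ∉ Aᶜ, σ x = x) ∧ OneOrbit (c * σ)}) := by
    refine Nat.card_eq_of_bijective (fun p =>
      (p.1 x₀, ⟨c⁻¹ * (p.1⁻¹ * (c * p.1)), fun x hx => ?_, ?_⟩)) ⟨?_, ?_⟩
    · have hxA : x ∈ A := by simpa using hx
      exact (hσfix p.1 x).mpr (p.2 x hxA)
    · have : c * (c⁻¹ * (p.1⁻¹ * (c * p.1))) = p.1⁻¹ * c * p.1 := by group
      rw [this]
      exact oneOrbit_conj hc
    · -- injective
      rintro ⟨p, hp⟩ ⟨p', hp'⟩ heq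
      simp only [Prod.mk.injEq, Subtype.mk.injEq] at heq
      obtain ⟨h0, hσ⟩ := heq
      have hconj : p⁻¹ * c * p = p'⁻¹ * c * p' := by
        have := congrArg (fun z => c * z) hσ
        simp only [← mul_assoc] at this
        simpa [mul_assoc, mul_inv_cancel_left] using this
      have hcomm : (p' * p⁻¹) * c = c * (p' * p⁻¹) := by
        have h1 := congrArg (fun z => p' * z * p⁻¹) hconj
        calc (p' * p⁻¹) * c = p' * (p⁻¹ * c * p) * p⁻¹ := by group
        _ = p' * (p'⁻¹ * c * p') * p⁻¹ := by rw [hconj]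
        _ = c * (p' * p⁻¹) := by group
      have hd : ∀ y, (p' * p⁻¹) y = y := by
        intro y
        obtain ⟨k, hk⟩ := hc (p x₀) y
        have hck : (p' * p⁻¹) * c ^ k = c ^ k * (p' * p⁻¹) := Commute.pow_right hcomm k
        have h2 : (p' * p⁻¹) ((c ^ k) (p x₀)) = (c ^ k) ((p' * p⁻¹) (p x₀)) := by
          rw [← Equiv.Perm.mul_apply, hck, Equiv.Perm.mul_apply]
        have h3 : (p' * p⁻¹) (p x₀) = p x₀ := by
          simp only [Equiv.Perm.mul_apply, Equiv.Perm.inv_def, Equiv.symm_apply_apply]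
          exact h0.symm
        rw [← hk, h2, h3]
      have : p' = p := by
        have h1 : p' * p⁻¹ = 1 := Equiv.ext fun y => hd y
        rwa [mul_inv_eq_one] at h1
      exact Subtype.ext this.symm
    · -- surjective
      rintro ⟨v, σ, hfixσ, horb⟩
      have hτm : (c * σ) ^ m = 1 := oneOrbit_pow_card horb
      set f₁ : ZMod m ≃ X :=
        Equiv.ofBijective _ (oneOrbit_eval_bijective horb x₀) with hf₁
      set f₂ : ZMod m ≃ X :=
        Equiv.ofBijective _ (oneOrbit_eval_bijective hc v) with hf₂
      set p : Equiv.Perm X := f₁.symm.trans f₂ with hpdef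
      have hf₁app : ∀ k : ZMod m, f₁ k = ((c * σ) ^ k.val) x₀ := fun k => rfl
      have hf₂app : ∀ k : ZMod m, f₂ k = (c ^ k.val) v := fun k => rfl
      have hintertwine : c * p = p * (c * σ) := by
        ext x
        obtain ⟨k, hk⟩ := f₁.surjective x
        have h1 : p x = (c ^ k.val) v := by rw [← hk, hpdef]; simp [hf₂app]
        have h2 : (c * σ) x = f₁ (k + 1) := by
          rw [← hk, hf₁app, hf₁app, ← Equiv.Perm.mul_apply, ← pow_succ']
          rw [pow_val_succ_apply _ hτm x₀ k, ← Equiv.Perm.mul_apply, ← pow_succ']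
        have h3 : p ((c * σ) x) = (c ^ ((k + 1).val)) v := by
          rw [h2, hpdef]; simp [hf₂app]
        show c (p x) = p ((c * σ) x)
        rw [h1, h3, pow_val_succ_apply _ hcm v k, ← Equiv.Perm.mul_apply, ← pow_succ']
      have hσeq : c⁻¹ * (p⁻¹ * (c * p)) = σ := by
        have h1 : p⁻¹ * (c * p) = c * σ := by
          rw [hintertwine, inv_mul_cancel_left]
        rw [h1, inv_mul_cancel_left]
      have hpx₀ : p x₀ = v := by
        have h0 : f₁ 0 = x₀ := by rw [hf₁app]; simp
        rw [hpdef]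
        simp [← h0, hf₂app]
      refine ⟨⟨p, ?_⟩, ?_⟩
      · intro i hi
        exact (hσfix p i).mp (by rw [hσeq]; exact hfixσ i (by simpa using hi))
      · simp only [Prod.mk.injEq, Subtype.mk.injEq]
        exact ⟨hpx₀, hσeq⟩
  rw [key, Nat.card_prod, Nat.card_eq_fintype_card]

end conj

section final
variable {X : Type*} [Fintype X] [DecidableEq X]

theorem card_restricted_empty (c : Equiv.Perm X) (hc : OneOrbit c) :
    Nat.card {σ : Equiv.Perm X // (∀ x ∉ (∅ : Finset X), σ x = x) ∧ OneOrbit (c * σ)}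
      = 1 := by
  haveI : Unique {σ : Equiv.Perm X // (∀ x ∉ (∅ : Finset X), σ x = x) ∧ OneOrbit (c * σ)} :=
    { default := ⟨1, fun x _ => rfl, by rwa [mul_one]⟩
      uniq := fun σ => Subtype.ext (Equiv.ext fun x => σ.2.1 x (Finset.notMem_empty x)) }
  exact Nat.card_unique

theorem inclusion_exclusion (c : Equiv.Perm X) :
    ((Nat.card {p : Equiv.Perm X // ∀ i : X, p (c i) ≠ c (p i)}) : ℤ)
      = ∑ A ∈ (Finset.univ : Finset X).powerset, (-1 : ℤ) ^ A.card *
          Nat.card {p : Equiv.Perm X // ∀ i ∈ A, p (c i) = c (p i)} := by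
  classical
  have hcard1 : Nat.card {p : Equiv.Perm X // ∀ i : X, p (c i) ≠ c (p i)}
      = (Finset.univ.filter (fun p : Equiv.Perm X => ∀ i : X, p (c i) ≠ c (p i))).card := by
    rw [Nat.card_eq_fintype_card, Fintype.card_subtype]
  have hcard2 : ∀ A : Finset X, Nat.card {p : Equiv.Perm X // ∀ i ∈ A, p (c i) = c (p i)}
      = (Finset.univ.filter (fun p : Equiv.Perm X => ∀ i ∈ A, p (c i) = c (p i))).card := by
    intro A
    rw [Nat.card_eq_fintype_card, Fintype.card_subtype]
  rw [hcard1]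
  have step1 : ((Finset.univ.filter
        (fun p : Equiv.Perm X => ∀ i : X, p (c i) ≠ c (p i))).card : ℤ)
      = ∑ p : Equiv.Perm X, if (∀ i : X, p (c i) ≠ c (p i)) then (1 : ℤ) else 0 := by
    rw [Finset.sum_boole]
  have hprod : ∀ p : Equiv.Perm X,
      (if (∀ i : X, p (c i) ≠ c (p i)) then (1 : ℤ) else 0)
        = ∏ i : X, ((if p (c i) = c (p i) then (-1 : ℤ) else 0) + 1) := by
    intro p
    by_cases h : ∀ i : X, p (c i) ≠ c (p i)
    · rw [if_pos h]
      rw [Finset.prod_congr rfl (fun i _ => by rw [if_neg (h i), zero_add]),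
        Finset.prod_const_one]
    · rw [if_neg h]
      push_neg at h
      obtain ⟨i, hi⟩ := h
      exact (Finset.prod_eq_zero (Finset.mem_univ i) (by rw [if_pos hi]; ring)).symm
  have hA : ∀ (p : Equiv.Perm X) (A : Finset X),
      (∏ i ∈ A, (if p (c i) = c (p i) then (-1 : ℤ) else 0))
        = if (∀ i ∈ A, p (c i) = c (p i)) then (-1 : ℤ) ^ A.card else 0 := by
    intro p A
    by_cases h : ∀ i ∈ A, p (c i) = c (p i)
    · rw [if_pos h, Finset.prod_congr rfl (fun i hi => by rw [if_pos (h i hi)]),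
        Finset.prod_const]
    · rw [if_neg h]
      push_neg at h
      obtain ⟨i, hiA, hi⟩ := h
      exact Finset.prod_eq_zero hiA (by rw [if_neg hi])
  calc ((Finset.univ.filter
        (fun p : Equiv.Perm X => ∀ i : X, p (c i) ≠ c (p i))).card : ℤ)
      = ∑ p : Equiv.Perm X, ∏ i : X, ((if p (c i) = c (p i) then (-1 : ℤ) else 0) + 1) := by
        rw [step1]; exact Finset.sum_congr rfl (fun p _ => hprod p)
    _ = ∑ p : Equiv.Perm X, ∑ A ∈ (Finset.univ : Finset X).powerset,
          ∏ i ∈ A, (if p (c i) = c (p i) then (-1 : ℤ) else 0) := by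
        refine Finset.sum_congr rfl (fun p _ => ?_)
        rw [Finset.prod_add]
        exact Finset.sum_congr rfl (fun A _ => by rw [Finset.prod_const_one, mul_one])
    _ = ∑ A ∈ (Finset.univ : Finset X).powerset, ∑ p : Equiv.Perm X,
          ∏ i ∈ A, (if p (c i) = c (p i) then (-1 : ℤ) else 0) := Finset.sum_comm
    _ = ∑ A ∈ (Finset.univ : Finset X).powerset, (-1 : ℤ) ^ A.card *
          Nat.card {p : Equiv.Perm X // ∀ i ∈ A, p (c i) = c (p i)} := by
        refine Finset.sum_congr rfl (fun A _ => ?_)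
        rw [Finset.sum_congr rfl (fun p _ => hA p A), hcard2 A]
        rw [← Finset.sum_filter, Finset.sum_const, nsmul_eq_mul, mul_comm]

end final

theorem core_count (k : ℕ) :
    (Nat.card {p : Equiv.Perm (ZMod (k + 1)) // ∀ i, p (i + 1) ≠ p i + 1} : ℤ)
      = ((k + 1 : ℕ) : ℤ) * (∑ j ∈ Finset.range (k + 1),
          (-1 : ℤ) ^ j * ((k + 1).choose j) * ((k + 1) - j - 1).factorial
          + (-1 : ℤ) ^ (k + 1)) := by
  classical
  set n := k + 1 with hn
  haveI : NeZero n := ⟨Nat.succ_ne_zero k⟩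
  set c : Equiv.Perm (ZMod n) := Equiv.addRight (1 : ZMod n) with hcdef
  have hcapp : ∀ x : ZMod n, c x = x + 1 := fun x => rfl
  have hcpow : ∀ (t : ℕ) (x : ZMod n), (c ^ t) x = x + t := by
    intro t
    induction t with
    | zero => intro x; simp
    | succ t ih =>
      intro x
      rw [pow_succ', Equiv.Perm.mul_apply, ih, hcapp]
      push_cast
      ring
  have hc : OneOrbit c := by
    intro x y
    refine ⟨(y - x).val, ?_⟩
    rw [hcpow, ZMod.natCast_rightInverse _]
    ring
  have hcond : Nat.card {p : Equiv.Perm (ZMod n) // ∀ i, p (i + 1) ≠ p i + 1}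
      = Nat.card {p : Equiv.Perm (ZMod n) // ∀ i : ZMod n, p (c i) ≠ c (p i)} := rfl
  rw [hcond, inclusion_exclusion c]
  have hcardX : Fintype.card (ZMod n) = n := ZMod.card n
  have hM : ∀ A : Finset (ZMod n),
      (Nat.card {p : Equiv.Perm (ZMod n) // ∀ i ∈ A, p (c i) = c (p i)} : ℤ)
        = n * (if A = Finset.univ then 1 else ((n - A.card - 1).factorial : ℤ)) := by
    intro A
    rw [card_constrained c hc A]
    by_cases hAu : A = Finset.univ
    · rw [if_pos hAu, hAu, Finset.compl_univ, card_restricted_empty c hc]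
      push_cast [hcardX]
      ring
    · rw [if_neg hAu]
      have hBne : (Aᶜ : Finset (ZMod n)).Nonempty := by
        rw [Finset.nonempty_iff_ne_empty]
        intro h
        apply hAu
        have h2 := congrArg (fun s : Finset (ZMod n) => sᶜ) h
        simpa using h2
      rw [card_restricted_oneOrbit c Aᶜ hc hBne, Finset.card_compl, hcardX]
      push_cast
      ring
  rw [Finset.sum_congr rfl (fun A _ => by rw [hM A])]
  have hucard : (Finset.univ : Finset (ZMod n)).card = n := by
    rw [Finset.card_univ, hcardX]
  rw [Finset.sum_powerset, hucard]
  rw [Finset.sum_range_succ]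
  have hlast : Finset.powersetCard n (Finset.univ : Finset (ZMod n)) = {Finset.univ} := by
    ext A
    simp only [Finset.mem_powersetCard, Finset.mem_singleton]
    constructor
    · rintro ⟨-, h2⟩
      exact Finset.eq_univ_of_card A (by rw [h2, hcardX])
    · rintro rfl
      exact ⟨Finset.Subset.refl _, hucard⟩
  rw [hlast, Finset.sum_singleton, if_pos rfl, hucard]
  have hinner : ∀ j ∈ Finset.range n,
      (∑ A ∈ Finset.powersetCard j (Finset.univ : Finset (ZMod n)),
        (-1 : ℤ) ^ A.card * (n * (if A = Finset.univ then 1 else ((n - A.card - 1).factorial : ℤ))))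
      = (n.choose j) * ((-1 : ℤ) ^ j * (n * ((n - j - 1).factorial : ℤ))) := by
    intro j hj
    rw [Finset.mem_range] at hj
    rw [Finset.sum_congr rfl (fun A hA => ?_), Finset.sum_const, Finset.card_powersetCard,
      hucard, nsmul_eq_mul]
    rw [Finset.mem_powersetCard] at hA
    have hAcard : A.card = j := hA.2
    have hAne : A ≠ Finset.univ := by
      intro h
      rw [h, hucard] at hAcard
      omega
    rw [if_neg hAne, hAcard]
  rw [Finset.sum_congr rfl hinner]
  rw [mul_add, Finset.mul_sum]
  congr 1
  · refine Finset.sum_congr rfl (fun j hj => ?_)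
    push_cast
    ring
  · push_cast
    ring

/-- The number of permutations of `{1,...,n}` with no circular 1-succession mod `n`
(positions cyclic via `finRotate`, values compared mod `n`) equals
`n · (∑_{j=0}^{n-1} (-1)^j C(n,j) (n-j-1)! + (-1)^n)`. Values 0-indexed. -/
theorem Dstar_n_formula (n : ℕ) (hn : 1 ≤ n) :
    (Nat.card {p : Equiv.Perm (Fin n) //
        ∀ i : Fin n, ((p (finRotate n i)) : ℕ) ≠ ((p i : ℕ) + 1) % n} : ℤ) =
      (n : ℤ) * (∑ j ∈ Finset.range n,
        (-1 : ℤ) ^ j * n.choose j * (n - j - 1).factorial + (-1 : ℤ) ^ n) := by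
  obtain ⟨k, rfl⟩ : ∃ k, n = k + 1 := ⟨n - 1, (Nat.succ_pred_eq_of_pos hn).symm⟩
  haveI : NeZero (k + 1) := ⟨Nat.succ_ne_zero k⟩
  have hcongr : Nat.card {p : Equiv.Perm (Fin (k + 1)) //
        ∀ i : Fin (k + 1), ((p (finRotate (k + 1) i)) : ℕ) ≠ ((p i : ℕ) + 1) % (k + 1)}
      = Nat.card {p : Equiv.Perm (ZMod (k + 1)) // ∀ i, p (i + 1) ≠ p i + 1} := by
    apply Nat.card_congr
    apply Equiv.subtypeEquiv (Equiv.refl (Equiv.Perm (Fin (k + 1))))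
    intro p
    refine forall_congr' fun i => ?_
    rw [finRotate_succ_apply]
    have hv : ((p i + 1 : Fin (k + 1)) : ℕ) = ((p i : ℕ) + 1) % (k + 1) :=
      zmod_val_add_one (m := k + 1) (p i)
    rw [← hv]
    exact not_congr (Fin.val_eq_val _ _)
  rw [hcongr, core_count k]
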